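/- arXiv:1801.03332 — 2 statements merged into one kernel-verified Lean document; each statement's English description precedes it below -/
import Mathlib

section
/- Let (α_j, β_j) and (α_k, β_k) be two independent pairs of complex random variables, each pair satisfying E α = E β = 0, E|α|² = E|β|² = 1/2, E α² = E β² = 0, E(αβ) = E(α conj(β)) = 0. Define ϖ = α_k conj(α_j) + β_k conj(β_j) and ω = −α_k β_j + β_k α_j. Then E ϖ² = E ω² = E(ϖ ω) = E(conj(ϖ) ω) = 0 and E|ϖ|² = E|ω|² = 1/2. -/
open MeasureTheory ProbabilityTheory

namespace QPMaux

variable {Ω : Type} [MeasurableSpace Ω] {P : Measure Ω}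

lemma integrable_mul2 {f g : Ω → ℂ} (hf : MemLp f 2 P) (hg : MemLp g 2 P) :
    Integrable (fun ω => f ω * g ω) P := by
  have h : MemLp (f • g) 1 P :=
    MemLp.smul hg hf
  rw [memLp_one_iff_integrable] at h
  exact h

lemma memLp_conj {f : Ω → ℂ} (hf : MemLp f 2 P) :
    MemLp (fun ω => (starRingEnd ℂ) (f ω)) 2 P :=
  MemLp.of_le hf (RCLike.continuous_conj.comp_aestronglyMeasurable hf.1)
    (Filter.Eventually.of_forall fun ω => by simp)

lemma mc : Measurable fun z : ℂ => (starRingEnd ℂ) z :=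
  RCLike.continuous_conj.measurable

lemma indep_mul {X Y : Ω → ℂ} (h : IndepFun X Y P) (hX : Integrable X P) (hY : Integrable Y P) :
    ∫ ω, X ω * Y ω ∂P = (∫ ω, X ω ∂P) * ∫ ω, Y ω ∂P := by
  have hXY : Integrable (fun ω => X ω * Y ω) P := h.integrable_mul hX hY
  have hXr : Integrable (fun ω => (X ω).re) P := by simpa using hX.re
  have hXi : Integrable (fun ω => (X ω).im) P := by simpa using hX.im
  have hYr : Integrable (fun ω => (Y ω).re) P := by simpa using hY.re
  have hYi : Integrable (fun ω => (Y ω).im) P := by simpa using hY.im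
  have hrr : ∫ ω, (X ω).re * (Y ω).re ∂P = (∫ ω, (X ω).re ∂P) * ∫ ω, (Y ω).re ∂P :=
    (h.comp Complex.measurable_re Complex.measurable_re).integral_fun_mul_eq_mul_integral hXr.1 hYr.1
  have hri : ∫ ω, (X ω).re * (Y ω).im ∂P = (∫ ω, (X ω).re ∂P) * ∫ ω, (Y ω).im ∂P :=
    (h.comp Complex.measurable_re Complex.measurable_im).integral_fun_mul_eq_mul_integral hXr.1 hYi.1
  have hir : ∫ ω, (X ω).im * (Y ω).re ∂P = (∫ ω, (X ω).im ∂P) * ∫ ω, (Y ω).re ∂P :=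
    (h.comp Complex.measurable_im Complex.measurable_re).integral_fun_mul_eq_mul_integral hXi.1 hYr.1
  have hii : ∫ ω, (X ω).im * (Y ω).im ∂P = (∫ ω, (X ω).im ∂P) * ∫ ω, (Y ω).im ∂P :=
    (h.comp Complex.measurable_im Complex.measurable_im).integral_fun_mul_eq_mul_integral hXi.1 hYi.1
  have irr : Integrable (fun ω => (X ω).re * (Y ω).re) P :=
    (h.comp Complex.measurable_re Complex.measurable_re).integrable_mul hXr hYr
  have iri : Integrable (fun ω => (X ω).re * (Y ω).im) P :=
    (h.comp Complex.measurable_re Complex.measurable_im).integrable_mul hXr hYi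
  have iir : Integrable (fun ω => (X ω).im * (Y ω).re) P :=
    (h.comp Complex.measurable_im Complex.measurable_re).integrable_mul hXi hYr
  have iii : Integrable (fun ω => (X ω).im * (Y ω).im) P :=
    (h.comp Complex.measurable_im Complex.measurable_im).integrable_mul hXi hYi
  have eXr : ∫ ω, (X ω).re ∂P = (∫ ω, X ω ∂P).re := by simpa using integral_re hX
  have eXi : ∫ ω, (X ω).im ∂P = (∫ ω, X ω ∂P).im := by simpa using integral_im hX
  have eYr : ∫ ω, (Y ω).re ∂P = (∫ ω, Y ω ∂P).re := by simpa using integral_re hY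
  have eYi : ∫ ω, (Y ω).im ∂P = (∫ ω, Y ω ∂P).im := by simpa using integral_im hY
  apply Complex.ext
  · have e1 : (∫ ω, X ω * Y ω ∂P).re = ∫ ω, (X ω * Y ω).re ∂P := by
      simpa using (integral_re hXY).symm
    have e2 : ∫ ω, (X ω * Y ω).re ∂P
        = ∫ ω, ((X ω).re * (Y ω).re - (X ω).im * (Y ω).im) ∂P :=
      integral_congr_ae (Filter.Eventually.of_forall fun ω => by simp [Complex.mul_re])
    rw [e1, e2, integral_sub irr iii, hrr, hii, eXr, eXi, eYr, eYi, Complex.mul_re]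
  · have e1 : (∫ ω, X ω * Y ω ∂P).im = ∫ ω, (X ω * Y ω).im ∂P := by
      simpa using (integral_im hXY).symm
    have e2 : ∫ ω, (X ω * Y ω).im ∂P
        = ∫ ω, ((X ω).re * (Y ω).im + (X ω).im * (Y ω).re) ∂P :=
      integral_congr_ae (Filter.Eventually.of_forall fun ω => by simp [Complex.mul_im])
    rw [e1, e2, integral_add iri iir, hri, hir, eXr, eXi, eYr, eYi, Complex.mul_im]

lemma integral_complex_ofReal {f : Ω → ℝ} :
    ∫ ω, ((f ω : ℝ) : ℂ) ∂P = ((∫ ω, f ω ∂P : ℝ) : ℂ) := integral_ofReal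

lemma mul_conj_norm (z : ℂ) : z * (starRingEnd ℂ) z = ((‖z‖ ^ 2 : ℝ) : ℂ) := by
  rw [Complex.mul_conj]
  norm_cast
  simp [Complex.normSq_eq_norm_sq]

end QPMaux

open QPMaux in
/-- Moment identities for the entries `ϖ = α_k conj(α_j) + β_k conj(β_j)` and
`ω = -α_k β_j + β_k α_j` of the product `x_k x_j*` of two independent quaternion random
variables: `E ϖ² = E ω² = E(ϖω) = E(conj(ϖ)ω) = 0` and `E|ϖ|² = E|ω|² = 1/2`. -/
theorem quaternion_product_moments
    {Ω : Type} [MeasurableSpace Ω] (P : Measure Ω) [IsProbabilityMeasure P]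
    (αj βj αk βk : Ω → ℂ)
    (hmαj : Measurable αj) (hmβj : Measurable βj)
    (hmαk : Measurable αk) (hmβk : Measurable βk)
    (hL2αj : MemLp αj 2 P) (hL2βj : MemLp βj 2 P)
    (hL2αk : MemLp αk 2 P) (hL2βk : MemLp βk 2 P)
    (hindep : IndepFun (fun ω => (αj ω, βj ω)) (fun ω => (αk ω, βk ω)) P)
    (hmean : (∫ ω, αj ω ∂P = 0) ∧ (∫ ω, βj ω ∂P = 0) ∧
      (∫ ω, αk ω ∂P = 0) ∧ (∫ ω, βk ω ∂P = 0))
    (habs2 : (∫ ω, ‖αj ω‖ ^ 2 ∂P = 1 / 2) ∧ (∫ ω, ‖βj ω‖ ^ 2 ∂P = 1 / 2) ∧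
      (∫ ω, ‖αk ω‖ ^ 2 ∂P = 1 / 2) ∧ (∫ ω, ‖βk ω‖ ^ 2 ∂P = 1 / 2))
    (hsq : (∫ ω, (αj ω) ^ 2 ∂P = 0) ∧ (∫ ω, (βj ω) ^ 2 ∂P = 0) ∧
      (∫ ω, (αk ω) ^ 2 ∂P = 0) ∧ (∫ ω, (βk ω) ^ 2 ∂P = 0))
    (hcross : (∫ ω, αj ω * βj ω ∂P = 0) ∧ (∫ ω, αk ω * βk ω ∂P = 0) ∧
      (∫ ω, αj ω * starRingEnd ℂ (βj ω) ∂P = 0) ∧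
      (∫ ω, αk ω * starRingEnd ℂ (βk ω) ∂P = 0)) :
    (∫ ω, (αk ω * starRingEnd ℂ (αj ω) + βk ω * starRingEnd ℂ (βj ω)) ^ 2 ∂P = 0) ∧
    (∫ ω, (-(αk ω) * βj ω + βk ω * αj ω) ^ 2 ∂P = 0) ∧
    (∫ ω, (αk ω * starRingEnd ℂ (αj ω) + βk ω * starRingEnd ℂ (βj ω)) *
        (-(αk ω) * βj ω + βk ω * αj ω) ∂P = 0) ∧
    (∫ ω, starRingEnd ℂ (αk ω * starRingEnd ℂ (αj ω) + βk ω * starRingEnd ℂ (βj ω)) *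
        (-(αk ω) * βj ω + βk ω * αj ω) ∂P = 0) ∧
    (∫ ω, ‖αk ω * starRingEnd ℂ (αj ω) + βk ω * starRingEnd ℂ (βj ω)‖ ^ 2 ∂P = 1 / 2) ∧
    (∫ ω, ‖-(αk ω) * βj ω + βk ω * αj ω‖ ^ 2 ∂P = 1 / 2) := by
  obtain ⟨hμ1, hμ2, hμ3, hμ4⟩ := hmean
  obtain ⟨ha1, ha2, ha3, ha4⟩ := habs2
  obtain ⟨hs1, hs2, hs3, hs4⟩ := hsq
  obtain ⟨hc1, hc2, hc3, hc4⟩ := hcross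
  set c := starRingEnd ℂ with hcdef
  have Lcαj : MemLp (fun ω => c (αj ω)) 2 P := memLp_conj hL2αj
  have Lcβj : MemLp (fun ω => c (βj ω)) 2 P := memLp_conj hL2βj
  have Lcαk : MemLp (fun ω => c (αk ω)) 2 P := memLp_conj hL2αk
  have Lcβk : MemLp (fun ω => c (βk ω)) 2 P := memLp_conj hL2βk
  have ma : Measurable fun p : ℂ × ℂ => p.1 := measurable_fst
  have mb : Measurable fun p : ℂ × ℂ => p.2 := measurable_snd
  have mca : Measurable fun p : ℂ × ℂ => c p.1 := mc.comp measurable_fst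
  have mcb : Measurable fun p : ℂ × ℂ => c p.2 := mc.comp measurable_snd
  have fac : ∀ (φ ψ : ℂ × ℂ → ℂ), Measurable φ → Measurable ψ →
      Integrable (fun ω => φ (αk ω, βk ω)) P → Integrable (fun ω => ψ (αj ω, βj ω)) P →
      (∫ ω, φ (αk ω, βk ω) * ψ (αj ω, βj ω) ∂P
          = (∫ ω, φ (αk ω, βk ω) ∂P) * ∫ ω, ψ (αj ω, βj ω) ∂P)
        ∧ Integrable (fun ω => φ (αk ω, βk ω) * ψ (αj ω, βj ω)) P := by
    intro φ ψ hφ hψ h1 h2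
    have hind : IndepFun (fun ω => φ (αk ω, βk ω)) (fun ω => ψ (αj ω, βj ω)) P :=
      hindep.symm.comp hφ hψ
    exact ⟨indep_mul hind h1 h2, hind.integrable_mul h1 h2⟩
  -- integrability of monomials
  have iKaa : Integrable (fun ω => αk ω * αk ω) P := integrable_mul2 hL2αk hL2αk
  have iKbb : Integrable (fun ω => βk ω * βk ω) P := integrable_mul2 hL2βk hL2βk
  have iKab : Integrable (fun ω => αk ω * βk ω) P := integrable_mul2 hL2αk hL2βk
  have iKacb : Integrable (fun ω => αk ω * c (βk ω)) P := integrable_mul2 hL2αk Lcβk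
  have iKcab : Integrable (fun ω => c (αk ω) * βk ω) P := integrable_mul2 Lcαk hL2βk
  have iKaca : Integrable (fun ω => αk ω * c (αk ω)) P := integrable_mul2 hL2αk Lcαk
  have iKbcb : Integrable (fun ω => βk ω * c (βk ω)) P := integrable_mul2 hL2βk Lcβk
  have iKbca : Integrable (fun ω => βk ω * c (αk ω)) P := integrable_mul2 hL2βk Lcαk
  have iJcaca : Integrable (fun ω => c (αj ω) * c (αj ω)) P := integrable_mul2 Lcαj Lcαj
  have iJcbcb : Integrable (fun ω => c (βj ω) * c (βj ω)) P := integrable_mul2 Lcβj Lcβj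
  have iJcacb : Integrable (fun ω => c (αj ω) * c (βj ω)) P := integrable_mul2 Lcαj Lcβj
  have iJaa : Integrable (fun ω => αj ω * αj ω) P := integrable_mul2 hL2αj hL2αj
  have iJbb : Integrable (fun ω => βj ω * βj ω) P := integrable_mul2 hL2βj hL2βj
  have iJab : Integrable (fun ω => αj ω * βj ω) P := integrable_mul2 hL2αj hL2βj
  have iJcab : Integrable (fun ω => c (αj ω) * βj ω) P := integrable_mul2 Lcαj hL2βj
  have iJacb : Integrable (fun ω => αj ω * c (βj ω)) P := integrable_mul2 hL2αj Lcβj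
  have iJcaa : Integrable (fun ω => c (αj ω) * αj ω) P := integrable_mul2 Lcαj hL2αj
  have iJcbb : Integrable (fun ω => c (βj ω) * βj ω) P := integrable_mul2 Lcβj hL2βj
  have iJcba : Integrable (fun ω => c (βj ω) * αj ω) P := integrable_mul2 Lcβj hL2αj
  have iJaca : Integrable (fun ω => αj ω * c (αj ω)) P := integrable_mul2 hL2αj Lcαj
  have iJbcb : Integrable (fun ω => βj ω * c (βj ω)) P := integrable_mul2 hL2βj Lcβj
  -- values of k-side integrals
  have vKaa : ∫ ω, αk ω * αk ω ∂P = 0 := by simpa [pow_two] using hs3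
  have vKbb : ∫ ω, βk ω * βk ω ∂P = 0 := by simpa [pow_two] using hs4
  have vKab : ∫ ω, αk ω * βk ω ∂P = 0 := hc2
  have vKacb : ∫ ω, αk ω * c (βk ω) ∂P = 0 := hc4
  have vKcab : ∫ ω, c (αk ω) * βk ω ∂P = 0 := by
    have h0 : ∫ ω, c (αk ω * c (βk ω)) ∂P = 0 := by rw [integral_conj, hc4, map_zero]
    simpa [map_mul] using h0
  have vKbca : ∫ ω, βk ω * c (αk ω) ∂P = 0 := by
    rw [show (fun ω => βk ω * c (αk ω)) = fun ω => c (αk ω) * βk ω from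
      funext fun ω => mul_comm _ _]
    exact vKcab
  have vKaca : ∫ ω, αk ω * c (αk ω) ∂P = (1 / 2 : ℂ) := by
    calc ∫ ω, αk ω * c (αk ω) ∂P = ∫ ω, ((‖αk ω‖ ^ 2 : ℝ) : ℂ) ∂P :=
          integral_congr_ae (Filter.Eventually.of_forall fun ω => mul_conj_norm _)
      _ = ((∫ ω, ‖αk ω‖ ^ 2 ∂P : ℝ) : ℂ) := by rw [QPMaux.integral_complex_ofReal]
      _ = (1 / 2 : ℂ) := by rw [ha3]; norm_num
  have vKbcb : ∫ ω, βk ω * c (βk ω) ∂P = (1 / 2 : ℂ) := by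
    calc ∫ ω, βk ω * c (βk ω) ∂P = ∫ ω, ((‖βk ω‖ ^ 2 : ℝ) : ℂ) ∂P :=
          integral_congr_ae (Filter.Eventually.of_forall fun ω => mul_conj_norm _)
      _ = ((∫ ω, ‖βk ω‖ ^ 2 ∂P : ℝ) : ℂ) := by rw [QPMaux.integral_complex_ofReal]
      _ = (1 / 2 : ℂ) := by rw [ha4]; norm_num
  -- values of j-side integrals
  have vJaa : ∫ ω, αj ω * αj ω ∂P = 0 := by simpa [pow_two] using hs1
  have vJbb : ∫ ω, βj ω * βj ω ∂P = 0 := by simpa [pow_two] using hs2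
  have vJab : ∫ ω, αj ω * βj ω ∂P = 0 := hc1
  have vJcaca : ∫ ω, c (αj ω) * c (αj ω) ∂P = 0 := by
    have h0 : ∫ ω, c (αj ω * αj ω) ∂P = 0 := by rw [integral_conj, vJaa, map_zero]
    simpa [map_mul] using h0
  have vJcbcb : ∫ ω, c (βj ω) * c (βj ω) ∂P = 0 := by
    have h0 : ∫ ω, c (βj ω * βj ω) ∂P = 0 := by rw [integral_conj, vJbb, map_zero]
    simpa [map_mul] using h0
  have vJcacb : ∫ ω, c (αj ω) * c (βj ω) ∂P = 0 := by
    have h0 : ∫ ω, c (αj ω * βj ω) ∂P = 0 := by rw [integral_conj, hc1, map_zero]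
    simpa [map_mul] using h0
  have vJacb : ∫ ω, αj ω * c (βj ω) ∂P = 0 := hc3
  have vJcab : ∫ ω, c (αj ω) * βj ω ∂P = 0 := by
    have h0 : ∫ ω, c (αj ω * c (βj ω)) ∂P = 0 := by rw [integral_conj, hc3, map_zero]
    simpa [map_mul] using h0
  have vJaca : ∫ ω, αj ω * c (αj ω) ∂P = (1 / 2 : ℂ) := by
    calc ∫ ω, αj ω * c (αj ω) ∂P = ∫ ω, ((‖αj ω‖ ^ 2 : ℝ) : ℂ) ∂P :=
          integral_congr_ae (Filter.Eventually.of_forall fun ω => mul_conj_norm _)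
      _ = ((∫ ω, ‖αj ω‖ ^ 2 ∂P : ℝ) : ℂ) := by rw [QPMaux.integral_complex_ofReal]
      _ = (1 / 2 : ℂ) := by rw [ha1]; norm_num
  have vJbcb : ∫ ω, βj ω * c (βj ω) ∂P = (1 / 2 : ℂ) := by
    calc ∫ ω, βj ω * c (βj ω) ∂P = ∫ ω, ((‖βj ω‖ ^ 2 : ℝ) : ℂ) ∂P :=
          integral_congr_ae (Filter.Eventually.of_forall fun ω => mul_conj_norm _)
      _ = ((∫ ω, ‖βj ω‖ ^ 2 ∂P : ℝ) : ℂ) := by rw [QPMaux.integral_complex_ofReal]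
      _ = (1 / 2 : ℂ) := by rw [ha2]; norm_num
  -- Goal 1
  have g1 : ∫ ω, (αk ω * c (αj ω) + βk ω * c (βj ω)) ^ 2 ∂P = 0 := by
    have F1 := fac (fun p => p.1 * p.1) (fun p => c p.1 * c p.1)
      (ma.mul ma) (mca.mul mca) iKaa iJcaca
    have F2 := fac (fun p => p.1 * p.2) (fun p => 2 * (c p.1 * c p.2))
      (ma.mul mb) (measurable_const.mul (mca.mul mcb)) iKab (iJcacb.const_mul 2)
    have F3 := fac (fun p => p.2 * p.2) (fun p => c p.2 * c p.2)
      (mb.mul mb) (mcb.mul mcb) iKbb iJcbcb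
    have E1 : ∫ ω, (αk ω * αk ω) * (c (αj ω) * c (αj ω)) ∂P = 0 := by
      rw [show (∫ ω, (αk ω * αk ω) * (c (αj ω) * c (αj ω)) ∂P
        = (∫ ω, αk ω * αk ω ∂P) * ∫ ω, c (αj ω) * c (αj ω) ∂P) from F1.1, vKaa, zero_mul]
    have E2 : ∫ ω, (αk ω * βk ω) * (2 * (c (αj ω) * c (βj ω))) ∂P = 0 := by
      rw [show (∫ ω, (αk ω * βk ω) * (2 * (c (αj ω) * c (βj ω))) ∂P
        = (∫ ω, αk ω * βk ω ∂P) * ∫ ω, 2 * (c (αj ω) * c (βj ω)) ∂P) from F2.1, vKab, zero_mul]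
    have E3 : ∫ ω, (βk ω * βk ω) * (c (βj ω) * c (βj ω)) ∂P = 0 := by
      rw [show (∫ ω, (βk ω * βk ω) * (c (βj ω) * c (βj ω)) ∂P
        = (∫ ω, βk ω * βk ω ∂P) * ∫ ω, c (βj ω) * c (βj ω) ∂P) from F3.1, vKbb, zero_mul]
    have I1 : Integrable (fun ω => (αk ω * αk ω) * (c (αj ω) * c (αj ω))) P := F1.2
    have I2 : Integrable (fun ω => (αk ω * βk ω) * (2 * (c (αj ω) * c (βj ω)))) P := F2.2
    have I3 : Integrable (fun ω => (βk ω * βk ω) * (c (βj ω) * c (βj ω))) P := F3.2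
    calc ∫ ω, (αk ω * c (αj ω) + βk ω * c (βj ω)) ^ 2 ∂P
        = ∫ ω, ((αk ω * αk ω) * (c (αj ω) * c (αj ω))
            + ((αk ω * βk ω) * (2 * (c (αj ω) * c (βj ω)))
              + (βk ω * βk ω) * (c (βj ω) * c (βj ω)))) ∂P :=
          integral_congr_ae (Filter.Eventually.of_forall fun ω => by ring)
      _ = 0 := by
          have I23 : Integrable (fun ω => (αk ω * βk ω) * (2 * (c (αj ω) * c (βj ω)))
              + (βk ω * βk ω) * (c (βj ω) * c (βj ω))) P := I2.add I3
          rw [integral_add I1 I23, integral_add I2 I3, E1, E2, E3]; ring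
  -- Goal 2
  have g2 : ∫ ω, (-(αk ω) * βj ω + βk ω * αj ω) ^ 2 ∂P = 0 := by
    have F1 := fac (fun p => p.1 * p.1) (fun p => p.2 * p.2)
      (ma.mul ma) (mb.mul mb) iKaa iJbb
    have F2 := fac (fun p => p.1 * p.2) (fun p => (-2) * (p.1 * p.2))
      (ma.mul mb) (measurable_const.mul (ma.mul mb)) iKab (iJab.const_mul (-2))
    have F3 := fac (fun p => p.2 * p.2) (fun p => p.1 * p.1)
      (mb.mul mb) (ma.mul ma) iKbb iJaa
    have E1 : ∫ ω, (αk ω * αk ω) * (βj ω * βj ω) ∂P = 0 := by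
      rw [show (∫ ω, (αk ω * αk ω) * (βj ω * βj ω) ∂P
        = (∫ ω, αk ω * αk ω ∂P) * ∫ ω, βj ω * βj ω ∂P) from F1.1, vKaa, zero_mul]
    have E2 : ∫ ω, (αk ω * βk ω) * ((-2) * (αj ω * βj ω)) ∂P = 0 := by
      rw [show (∫ ω, (αk ω * βk ω) * ((-2) * (αj ω * βj ω)) ∂P
        = (∫ ω, αk ω * βk ω ∂P) * ∫ ω, (-2) * (αj ω * βj ω) ∂P) from F2.1, vKab, zero_mul]
    have E3 : ∫ ω, (βk ω * βk ω) * (αj ω * αj ω) ∂P = 0 := by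
      rw [show (∫ ω, (βk ω * βk ω) * (αj ω * αj ω) ∂P
        = (∫ ω, βk ω * βk ω ∂P) * ∫ ω, αj ω * αj ω ∂P) from F3.1, vKbb, zero_mul]
    have I1 : Integrable (fun ω => (αk ω * αk ω) * (βj ω * βj ω)) P := F1.2
    have I2 : Integrable (fun ω => (αk ω * βk ω) * ((-2) * (αj ω * βj ω))) P := F2.2
    have I3 : Integrable (fun ω => (βk ω * βk ω) * (αj ω * αj ω)) P := F3.2
    calc ∫ ω, (-(αk ω) * βj ω + βk ω * αj ω) ^ 2 ∂P
        = ∫ ω, ((αk ω * αk ω) * (βj ω * βj ω)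
            + ((αk ω * βk ω) * ((-2) * (αj ω * βj ω))
              + (βk ω * βk ω) * (αj ω * αj ω))) ∂P :=
          integral_congr_ae (Filter.Eventually.of_forall fun ω => by ring)
      _ = 0 := by
          have I23 : Integrable (fun ω => (αk ω * βk ω) * ((-2) * (αj ω * βj ω))
              + (βk ω * βk ω) * (αj ω * αj ω)) P := I2.add I3
          rw [integral_add I1 I23, integral_add I2 I3, E1, E2, E3]; ring
  -- Goal 3
  have g3 : ∫ ω, (αk ω * c (αj ω) + βk ω * c (βj ω)) * (-(αk ω) * βj ω + βk ω * αj ω) ∂P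
      = 0 := by
    have F1 := fac (fun p => p.1 * p.1) (fun p => -(c p.1 * p.2))
      (ma.mul ma) (mca.mul mb).neg iKaa iJcab.neg
    have F2 := fac (fun p => p.1 * p.2) (fun p => c p.1 * p.1)
      (ma.mul mb) (mca.mul ma) iKab iJcaa
    have F3 := fac (fun p => p.1 * p.2) (fun p => -(c p.2 * p.2))
      (ma.mul mb) (mcb.mul mb).neg iKab iJcbb.neg
    have F4 := fac (fun p => p.2 * p.2) (fun p => c p.2 * p.1)
      (mb.mul mb) (mcb.mul ma) iKbb iJcba
    have E1 : ∫ ω, (αk ω * αk ω) * (-(c (αj ω) * βj ω)) ∂P = 0 := by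
      rw [show (∫ ω, (αk ω * αk ω) * (-(c (αj ω) * βj ω)) ∂P
        = (∫ ω, αk ω * αk ω ∂P) * ∫ ω, -(c (αj ω) * βj ω) ∂P) from F1.1, vKaa, zero_mul]
    have E2 : ∫ ω, (αk ω * βk ω) * (c (αj ω) * αj ω) ∂P = 0 := by
      rw [show (∫ ω, (αk ω * βk ω) * (c (αj ω) * αj ω) ∂P
        = (∫ ω, αk ω * βk ω ∂P) * ∫ ω, c (αj ω) * αj ω ∂P) from F2.1, vKab, zero_mul]
    have E3 : ∫ ω, (αk ω * βk ω) * (-(c (βj ω) * βj ω)) ∂P = 0 := by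
      rw [show (∫ ω, (αk ω * βk ω) * (-(c (βj ω) * βj ω)) ∂P
        = (∫ ω, αk ω * βk ω ∂P) * ∫ ω, -(c (βj ω) * βj ω) ∂P) from F3.1, vKab, zero_mul]
    have E4 : ∫ ω, (βk ω * βk ω) * (c (βj ω) * αj ω) ∂P = 0 := by
      rw [show (∫ ω, (βk ω * βk ω) * (c (βj ω) * αj ω) ∂P
        = (∫ ω, βk ω * βk ω ∂P) * ∫ ω, c (βj ω) * αj ω ∂P) from F4.1, vKbb, zero_mul]
    have I1 : Integrable (fun ω => (αk ω * αk ω) * (-(c (αj ω) * βj ω))) P := F1.2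
    have I2 : Integrable (fun ω => (αk ω * βk ω) * (c (αj ω) * αj ω)) P := F2.2
    have I3 : Integrable (fun ω => (αk ω * βk ω) * (-(c (βj ω) * βj ω))) P := F3.2
    have I4 : Integrable (fun ω => (βk ω * βk ω) * (c (βj ω) * αj ω)) P := F4.2
    calc ∫ ω, (αk ω * c (αj ω) + βk ω * c (βj ω)) * (-(αk ω) * βj ω + βk ω * αj ω) ∂P
        = ∫ ω, ((αk ω * αk ω) * (-(c (αj ω) * βj ω))
            + ((αk ω * βk ω) * (c (αj ω) * αj ω)
              + ((αk ω * βk ω) * (-(c (βj ω) * βj ω))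
                + (βk ω * βk ω) * (c (βj ω) * αj ω)))) ∂P :=
          integral_congr_ae (Filter.Eventually.of_forall fun ω => by ring)
      _ = 0 := by
          have I34 : Integrable (fun ω => (αk ω * βk ω) * (-(c (βj ω) * βj ω))
              + (βk ω * βk ω) * (c (βj ω) * αj ω)) P := I3.add I4
          have I234 : Integrable (fun ω => (αk ω * βk ω) * (c (αj ω) * αj ω)
              + ((αk ω * βk ω) * (-(c (βj ω) * βj ω))
                + (βk ω * βk ω) * (c (βj ω) * αj ω))) P := I2.add I34
          rw [integral_add I1 I234, integral_add I2 I34,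
            integral_add I3 I4, E1, E2, E3, E4]; ring
  -- Goal 4
  have g4 : ∫ ω, c (αk ω * c (αj ω) + βk ω * c (βj ω)) * (-(αk ω) * βj ω + βk ω * αj ω) ∂P
      = 0 := by
    have F1 := fac (fun p => p.1 * c p.1) (fun p => -(p.1 * p.2))
      (ma.mul mca) (ma.mul mb).neg iKaca iJab.neg
    have F2 := fac (fun p => c p.1 * p.2) (fun p => p.1 * p.1)
      (mca.mul mb) (ma.mul ma) iKcab iJaa
    have F3 := fac (fun p => p.1 * c p.2) (fun p => -(p.2 * p.2))
      (ma.mul mcb) (mb.mul mb).neg iKacb iJbb.neg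
    have F4 := fac (fun p => p.2 * c p.2) (fun p => p.1 * p.2)
      (mb.mul mcb) (ma.mul mb) iKbcb iJab
    have vJabneg : ∫ ω, -(αj ω * βj ω) ∂P = 0 := by rw [integral_neg, vJab, neg_zero]
    have E1 : ∫ ω, (αk ω * c (αk ω)) * (-(αj ω * βj ω)) ∂P = 0 := by
      rw [show (∫ ω, (αk ω * c (αk ω)) * (-(αj ω * βj ω)) ∂P
        = (∫ ω, αk ω * c (αk ω) ∂P) * ∫ ω, -(αj ω * βj ω) ∂P) from F1.1, vJabneg, mul_zero]
    have E2 : ∫ ω, (c (αk ω) * βk ω) * (αj ω * αj ω) ∂P = 0 := by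
      rw [show (∫ ω, (c (αk ω) * βk ω) * (αj ω * αj ω) ∂P
        = (∫ ω, c (αk ω) * βk ω ∂P) * ∫ ω, αj ω * αj ω ∂P) from F2.1, vKcab, zero_mul]
    have E3 : ∫ ω, (αk ω * c (βk ω)) * (-(βj ω * βj ω)) ∂P = 0 := by
      rw [show (∫ ω, (αk ω * c (βk ω)) * (-(βj ω * βj ω)) ∂P
        = (∫ ω, αk ω * c (βk ω) ∂P) * ∫ ω, -(βj ω * βj ω) ∂P) from F3.1, vKacb, zero_mul]
    have E4 : ∫ ω, (βk ω * c (βk ω)) * (αj ω * βj ω) ∂P = 0 := by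
      rw [show (∫ ω, (βk ω * c (βk ω)) * (αj ω * βj ω) ∂P
        = (∫ ω, βk ω * c (βk ω) ∂P) * ∫ ω, αj ω * βj ω ∂P) from F4.1, vJab, mul_zero]
    have I1 : Integrable (fun ω => (αk ω * c (αk ω)) * (-(αj ω * βj ω))) P := F1.2
    have I2 : Integrable (fun ω => (c (αk ω) * βk ω) * (αj ω * αj ω)) P := F2.2
    have I3 : Integrable (fun ω => (αk ω * c (βk ω)) * (-(βj ω * βj ω))) P := F3.2
    have I4 : Integrable (fun ω => (βk ω * c (βk ω)) * (αj ω * βj ω)) P := F4.2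
    calc ∫ ω, c (αk ω * c (αj ω) + βk ω * c (βj ω)) * (-(αk ω) * βj ω + βk ω * αj ω) ∂P
        = ∫ ω, ((αk ω * c (αk ω)) * (-(αj ω * βj ω))
            + ((c (αk ω) * βk ω) * (αj ω * αj ω)
              + ((αk ω * c (βk ω)) * (-(βj ω * βj ω))
                + (βk ω * c (βk ω)) * (αj ω * βj ω)))) ∂P :=
          integral_congr_ae (Filter.Eventually.of_forall fun ω => by
            simp only [hcdef, map_add, map_mul, Complex.conj_conj]; ring)
      _ = 0 := by
          have I34 : Integrable (fun ω => (αk ω * c (βk ω)) * (-(βj ω * βj ω))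
              + (βk ω * c (βk ω)) * (αj ω * βj ω)) P := I3.add I4
          have I234 : Integrable (fun ω => (c (αk ω) * βk ω) * (αj ω * αj ω)
              + ((αk ω * c (βk ω)) * (-(βj ω * βj ω))
                + (βk ω * c (βk ω)) * (αj ω * βj ω))) P := I2.add I34
          rw [integral_add I1 I234, integral_add I2 I34,
            integral_add I3 I4, E1, E2, E3, E4]; ring
  -- Goal 5
  have g5C : ∫ ω, (αk ω * c (αj ω) + βk ω * c (βj ω))
      * c (αk ω * c (αj ω) + βk ω * c (βj ω)) ∂P = (1 / 2 : ℂ) := by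
    have F1 := fac (fun p => p.1 * c p.1) (fun p => p.1 * c p.1)
      (ma.mul mca) (ma.mul mca) iKaca iJaca
    have F2 := fac (fun p => p.1 * c p.2) (fun p => c p.1 * p.2)
      (ma.mul mcb) (mca.mul mb) iKacb iJcab
    have F3 := fac (fun p => p.2 * c p.1) (fun p => p.1 * c p.2)
      (mb.mul mca) (ma.mul mcb) iKbca iJacb
    have F4 := fac (fun p => p.2 * c p.2) (fun p => p.2 * c p.2)
      (mb.mul mcb) (mb.mul mcb) iKbcb iJbcb
    have E1 : ∫ ω, (αk ω * c (αk ω)) * (αj ω * c (αj ω)) ∂P = (1 / 2 : ℂ) * (1 / 2 : ℂ) := by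
      rw [show (∫ ω, (αk ω * c (αk ω)) * (αj ω * c (αj ω)) ∂P
        = (∫ ω, αk ω * c (αk ω) ∂P) * ∫ ω, αj ω * c (αj ω) ∂P) from F1.1, vKaca, vJaca]
    have E2 : ∫ ω, (αk ω * c (βk ω)) * (c (αj ω) * βj ω) ∂P = 0 := by
      rw [show (∫ ω, (αk ω * c (βk ω)) * (c (αj ω) * βj ω) ∂P
        = (∫ ω, αk ω * c (βk ω) ∂P) * ∫ ω, c (αj ω) * βj ω ∂P) from F2.1, vKacb, zero_mul]
    have E3 : ∫ ω, (βk ω * c (αk ω)) * (αj ω * c (βj ω)) ∂P = 0 := by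
      rw [show (∫ ω, (βk ω * c (αk ω)) * (αj ω * c (βj ω)) ∂P
        = (∫ ω, βk ω * c (αk ω) ∂P) * ∫ ω, αj ω * c (βj ω) ∂P) from F3.1, vKbca, zero_mul]
    have E4 : ∫ ω, (βk ω * c (βk ω)) * (βj ω * c (βj ω)) ∂P = (1 / 2 : ℂ) * (1 / 2 : ℂ) := by
      rw [show (∫ ω, (βk ω * c (βk ω)) * (βj ω * c (βj ω)) ∂P
        = (∫ ω, βk ω * c (βk ω) ∂P) * ∫ ω, βj ω * c (βj ω) ∂P) from F4.1, vKbcb, vJbcb]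
    have I1 : Integrable (fun ω => (αk ω * c (αk ω)) * (αj ω * c (αj ω))) P := F1.2
    have I2 : Integrable (fun ω => (αk ω * c (βk ω)) * (c (αj ω) * βj ω)) P := F2.2
    have I3 : Integrable (fun ω => (βk ω * c (αk ω)) * (αj ω * c (βj ω))) P := F3.2
    have I4 : Integrable (fun ω => (βk ω * c (βk ω)) * (βj ω * c (βj ω))) P := F4.2
    calc ∫ ω, (αk ω * c (αj ω) + βk ω * c (βj ω))
        * c (αk ω * c (αj ω) + βk ω * c (βj ω)) ∂P
        = ∫ ω, ((αk ω * c (αk ω)) * (αj ω * c (αj ω))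
            + ((αk ω * c (βk ω)) * (c (αj ω) * βj ω)
              + ((βk ω * c (αk ω)) * (αj ω * c (βj ω))
                + (βk ω * c (βk ω)) * (βj ω * c (βj ω))))) ∂P :=
          integral_congr_ae (Filter.Eventually.of_forall fun ω => by
            simp only [hcdef, map_add, map_mul, Complex.conj_conj]; ring)
      _ = (1 / 2 : ℂ) := by
          have I34 : Integrable (fun ω => (βk ω * c (αk ω)) * (αj ω * c (βj ω))
              + (βk ω * c (βk ω)) * (βj ω * c (βj ω))) P := I3.add I4
          have I234 : Integrable (fun ω => (αk ω * c (βk ω)) * (c (αj ω) * βj ω)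
              + ((βk ω * c (αk ω)) * (αj ω * c (βj ω))
                + (βk ω * c (βk ω)) * (βj ω * c (βj ω)))) P := I2.add I34
          rw [integral_add I1 I234, integral_add I2 I34,
            integral_add I3 I4, E1, E2, E3, E4]; norm_num
  have g5 : ∫ ω, ‖αk ω * c (αj ω) + βk ω * c (βj ω)‖ ^ 2 ∂P = 1 / 2 := by
    have hcast : ((∫ ω, ‖αk ω * c (αj ω) + βk ω * c (βj ω)‖ ^ 2 ∂P : ℝ) : ℂ)
        = (1 / 2 : ℂ) := by
      rw [← QPMaux.integral_complex_ofReal,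
        show (∫ ω, ((‖αk ω * c (αj ω) + βk ω * c (βj ω)‖ ^ 2 : ℝ) : ℂ) ∂P)
          = ∫ ω, (αk ω * c (αj ω) + βk ω * c (βj ω))
              * c (αk ω * c (αj ω) + βk ω * c (βj ω)) ∂P from
          integral_congr_ae (Filter.Eventually.of_forall fun ω => (mul_conj_norm _).symm)]
      exact g5C
    have h2 : ((∫ ω, ‖αk ω * c (αj ω) + βk ω * c (βj ω)‖ ^ 2 ∂P : ℝ) : ℂ)
        = ((1 / 2 : ℝ) : ℂ) := by rw [hcast]; norm_num
    exact Complex.ofReal_injective h2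
  -- Goal 6
  have g6C : ∫ ω, (-(αk ω) * βj ω + βk ω * αj ω)
      * c (-(αk ω) * βj ω + βk ω * αj ω) ∂P = (1 / 2 : ℂ) := by
    have F1 := fac (fun p => p.1 * c p.1) (fun p => p.2 * c p.2)
      (ma.mul mca) (mb.mul mcb) iKaca iJbcb
    have F2 := fac (fun p => p.1 * c p.2) (fun p => -(c p.1 * p.2))
      (ma.mul mcb) (mca.mul mb).neg iKacb iJcab.neg
    have F3 := fac (fun p => p.2 * c p.1) (fun p => -(p.1 * c p.2))
      (mb.mul mca) (ma.mul mcb).neg iKbca iJacb.neg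
    have F4 := fac (fun p => p.2 * c p.2) (fun p => p.1 * c p.1)
      (mb.mul mcb) (ma.mul mca) iKbcb iJaca
    have E1 : ∫ ω, (αk ω * c (αk ω)) * (βj ω * c (βj ω)) ∂P = (1 / 2 : ℂ) * (1 / 2 : ℂ) := by
      rw [show (∫ ω, (αk ω * c (αk ω)) * (βj ω * c (βj ω)) ∂P
        = (∫ ω, αk ω * c (αk ω) ∂P) * ∫ ω, βj ω * c (βj ω) ∂P) from F1.1, vKaca, vJbcb]
    have E2 : ∫ ω, (αk ω * c (βk ω)) * (-(c (αj ω) * βj ω)) ∂P = 0 := by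
      rw [show (∫ ω, (αk ω * c (βk ω)) * (-(c (αj ω) * βj ω)) ∂P
        = (∫ ω, αk ω * c (βk ω) ∂P) * ∫ ω, -(c (αj ω) * βj ω) ∂P) from F2.1, vKacb, zero_mul]
    have E3 : ∫ ω, (βk ω * c (αk ω)) * (-(αj ω * c (βj ω))) ∂P = 0 := by
      rw [show (∫ ω, (βk ω * c (αk ω)) * (-(αj ω * c (βj ω))) ∂P
        = (∫ ω, βk ω * c (αk ω) ∂P) * ∫ ω, -(αj ω * c (βj ω)) ∂P) from F3.1, vKbca, zero_mul]
    have E4 : ∫ ω, (βk ω * c (βk ω)) * (αj ω * c (αj ω)) ∂P = (1 / 2 : ℂ) * (1 / 2 : ℂ) := by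
      rw [show (∫ ω, (βk ω * c (βk ω)) * (αj ω * c (αj ω)) ∂P
        = (∫ ω, βk ω * c (βk ω) ∂P) * ∫ ω, αj ω * c (αj ω) ∂P) from F4.1, vKbcb, vJaca]
    have I1 : Integrable (fun ω => (αk ω * c (αk ω)) * (βj ω * c (βj ω))) P := F1.2
    have I2 : Integrable (fun ω => (αk ω * c (βk ω)) * (-(c (αj ω) * βj ω))) P := F2.2
    have I3 : Integrable (fun ω => (βk ω * c (αk ω)) * (-(αj ω * c (βj ω)))) P := F3.2
    have I4 : Integrable (fun ω => (βk ω * c (βk ω)) * (αj ω * c (αj ω))) P := F4.2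
    calc ∫ ω, (-(αk ω) * βj ω + βk ω * αj ω) * c (-(αk ω) * βj ω + βk ω * αj ω) ∂P
        = ∫ ω, ((αk ω * c (αk ω)) * (βj ω * c (βj ω))
            + ((αk ω * c (βk ω)) * (-(c (αj ω) * βj ω))
              + ((βk ω * c (αk ω)) * (-(αj ω * c (βj ω)))
                + (βk ω * c (βk ω)) * (αj ω * c (αj ω))))) ∂P :=
          integral_congr_ae (Filter.Eventually.of_forall fun ω => by
            simp only [hcdef, map_add, map_mul, map_neg, Complex.conj_conj]; ring)
      _ = (1 / 2 : ℂ) := by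
          have I34 : Integrable (fun ω => (βk ω * c (αk ω)) * (-(αj ω * c (βj ω)))
              + (βk ω * c (βk ω)) * (αj ω * c (αj ω))) P := I3.add I4
          have I234 : Integrable (fun ω => (αk ω * c (βk ω)) * (-(c (αj ω) * βj ω))
              + ((βk ω * c (αk ω)) * (-(αj ω * c (βj ω)))
                + (βk ω * c (βk ω)) * (αj ω * c (αj ω)))) P := I2.add I34
          rw [integral_add I1 I234, integral_add I2 I34,
            integral_add I3 I4, E1, E2, E3, E4]; norm_num
  have g6 : ∫ ω, ‖-(αk ω) * βj ω + βk ω * αj ω‖ ^ 2 ∂P = 1 / 2 := by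
    have hcast : ((∫ ω, ‖-(αk ω) * βj ω + βk ω * αj ω‖ ^ 2 ∂P : ℝ) : ℂ) = (1 / 2 : ℂ) := by
      rw [← QPMaux.integral_complex_ofReal,
        show (∫ ω, ((‖-(αk ω) * βj ω + βk ω * αj ω‖ ^ 2 : ℝ) : ℂ) ∂P)
          = ∫ ω, (-(αk ω) * βj ω + βk ω * αj ω) * c (-(αk ω) * βj ω + βk ω * αj ω) ∂P from
          integral_congr_ae (Filter.Eventually.of_forall fun ω => (mul_conj_norm _).symm)]
      exact g6C
    have h2 : ((∫ ω, ‖-(αk ω) * βj ω + βk ω * αj ω‖ ^ 2 ∂P : ℝ) : ℂ)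
        = ((1 / 2 : ℝ) : ℂ) := by rw [hcast]; norm_num
    exact Complex.ofReal_injective h2
  exact ⟨g1, g2, g3, g4, g5, g6⟩
end

section
/- Let A = (a_{j,k}) and B = (b_{j,k}) be 2n×2n complex matrices partitioned into 2×2 blocks, both of Type-I. Let x₁, …, x_n be independent identically distributed 2×2 random quaternion blocks x_j = [[α_j, β_j], [−conj(β_j), conj(α_j)]] with E x_j = 0, E|α_j|² = E|β_j|² = 1/2, E α_j² = E β_j² = 0, E(α_j β_j) = E(α_j conj(β_j)) = 0. Then E[ Σ_{j ≠ k} tr(a_{j,k} x_k x_j*) tr(b_{k,j} x_j x_k*) ] = (1/2) tr(A B) − (1/4) Σ_{j=1}^n tr(a_{j,j}) tr(b_{j,j}). -/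
open MeasureTheory ProbabilityTheory Matrix
open scoped ComplexConjugate ENNReal NNReal

/-- The `(j,k)` `2×2` block of a `m × m` matrix; junk value `0` out of range. -/
noncomputable def blk {m : ℕ} (A : Matrix (Fin m) (Fin m) ℂ) (j k : ℕ) :
    Matrix (Fin 2) (Fin 2) ℂ := fun p q =>
  if h : 2 * j + (p : ℕ) < m ∧ 2 * k + (q : ℕ) < m then
    A ⟨2 * j + (p : ℕ), h.1⟩ ⟨2 * k + (q : ℕ), h.2⟩ else 0

/-- The `j`-th `2×2` block of a `m × 2` matrix (rows `2j, 2j+1`); junk value `0` out of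
range. -/
noncomputable def vblk {m : ℕ} (X : Matrix (Fin m) (Fin 2) ℂ) (j : ℕ) :
    Matrix (Fin 2) (Fin 2) ℂ := fun p q =>
  if h : 2 * j + (p : ℕ) < m then X ⟨2 * j + (p : ℕ), h⟩ q else 0

/-- `‖q‖_Q²` for a quaternion `q = [[α, β], [-conj β, conj α]]`. -/
noncomputable def qSq (q : Matrix (Fin 2) (Fin 2) ℂ) : ℝ := ‖q 0 0‖ ^ 2 + ‖q 0 1‖ ^ 2

/-- A `2×2` complex matrix has quaternion form `[[α, β], [-conj β, conj α]]`. -/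
def IsQuaternionBlock (q : Matrix (Fin 2) (Fin 2) ℂ) : Prop :=
  q 1 0 = -starRingEnd ℂ (q 0 1) ∧ q 1 1 = starRingEnd ℂ (q 0 0)

/-- A `2n × 2n` complex matrix, partitioned into `2×2` blocks `a_{j,k}`, is of Type-I if
each diagonal block is a scalar matrix `t_j I₂` and, for `j < k`, whenever
`a_{j,k} = [[a, b], [c, d]]` then `a_{k,j} = [[d, -b], [-c, a]]`. -/
def IsTypeI {n : ℕ} (A : Matrix (Fin (2 * n)) (Fin (2 * n)) ℂ) : Prop :=
  (∀ j < n, blk A j j 0 1 = 0 ∧ blk A j j 1 0 = 0 ∧ blk A j j 0 0 = blk A j j 1 1) ∧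
  (∀ j k, j < k → k < n →
    blk A k j 0 0 = blk A j k 1 1 ∧ blk A k j 0 1 = -blk A j k 0 1 ∧
    blk A k j 1 0 = -blk A j k 1 0 ∧ blk A k j 1 1 = blk A j k 0 0)

variable {Ω : Type} [MeasurableSpace Ω] {μ : Measure Ω}

lemma integrable_mul_L2 {f g : Ω → ℂ} (hf : MemLp f 2 μ) (hg : MemLp g 2 μ) :
    Integrable (fun ω => f ω * g ω) μ := by
  have hpqr : (1 : ℝ≥0∞) / 1 = 1 / 2 + 1 / 2 := by
    rw [ENNReal.div_add_div_same, one_div_one, one_add_one_eq_two,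
      ENNReal.div_self (by norm_num) (by norm_num)]
  have h : MemLp (f • g) 1 μ := hg.smul hf (hpqr := ⟨by rw [ENNReal.inv_two_add_inv_two, inv_one]⟩)
  rw [← memLp_one_iff_integrable]
  exact h

lemma memLp_conj {f : Ω → ℂ} (hf : MemLp f 2 μ) :
    MemLp (fun ω => conj (f ω)) 2 μ := by
  refine ⟨RCLike.continuous_conj.comp_aestronglyMeasurable hf.1, ?_⟩
  rw [show (fun ω => conj (f ω)) = conj f from rfl, eLpNorm_conj]
  exact hf.2

lemma indep_integral_mul_c {X Y : Ω → ℂ} (h : IndepFun X Y μ)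
    (hX : Integrable X μ) (hY : Integrable Y μ) :
    ∫ ω, X ω * Y ω ∂μ = (∫ ω, X ω ∂μ) * ∫ ω, Y ω ∂μ := by
  have key : ∀ f : Ω → ℂ, Integrable f μ →
      (∫ ω, f ω ∂μ).re = ∫ ω, (f ω).re ∂μ ∧ (∫ ω, f ω ∂μ).im = ∫ ω, (f ω).im ∂μ := by
    intro f hf
    constructor
    · simpa using (Complex.reCLM.integral_comp_comm hf).symm
    · simpa using (Complex.imCLM.integral_comp_comm hf).symm
  have hXr : Integrable (fun ω => (X ω).re) μ := by
    simpa using Complex.reCLM.integrable_comp hX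
  have hXi : Integrable (fun ω => (X ω).im) μ := by
    simpa using Complex.imCLM.integrable_comp hX
  have hYr : Integrable (fun ω => (Y ω).re) μ := by
    simpa using Complex.reCLM.integrable_comp hY
  have hYi : Integrable (fun ω => (Y ω).im) μ := by
    simpa using Complex.imCLM.integrable_comp hY
  have hrr : IndepFun (fun ω => (X ω).re) (fun ω => (Y ω).re) μ :=
    h.comp Complex.measurable_re Complex.measurable_re
  have hri : IndepFun (fun ω => (X ω).re) (fun ω => (Y ω).im) μ :=
    h.comp Complex.measurable_re Complex.measurable_im
  have hir : IndepFun (fun ω => (X ω).im) (fun ω => (Y ω).re) μ :=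
    h.comp Complex.measurable_im Complex.measurable_re
  have hii : IndepFun (fun ω => (X ω).im) (fun ω => (Y ω).im) μ :=
    h.comp Complex.measurable_im Complex.measurable_im
  have Irr : Integrable (fun ω => (X ω).re * (Y ω).re) μ := hrr.integrable_mul hXr hYr
  have Iri : Integrable (fun ω => (X ω).re * (Y ω).im) μ := hri.integrable_mul hXr hYi
  have Iir : Integrable (fun ω => (X ω).im * (Y ω).re) μ := hir.integrable_mul hXi hYr
  have Iii : Integrable (fun ω => (X ω).im * (Y ω).im) μ := hii.integrable_mul hXi hYi
  have err : ∫ ω, (X ω).re * (Y ω).re ∂μ = (∫ ω, (X ω).re ∂μ) * ∫ ω, (Y ω).re ∂μ :=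
    IndepFun.integral_fun_mul_eq_mul_integral hrr hXr.1 hYr.1
  have eri : ∫ ω, (X ω).re * (Y ω).im ∂μ = (∫ ω, (X ω).re ∂μ) * ∫ ω, (Y ω).im ∂μ :=
    IndepFun.integral_fun_mul_eq_mul_integral hri hXr.1 hYi.1
  have eir : ∫ ω, (X ω).im * (Y ω).re ∂μ = (∫ ω, (X ω).im ∂μ) * ∫ ω, (Y ω).re ∂μ :=
    IndepFun.integral_fun_mul_eq_mul_integral hir hXi.1 hYr.1
  have eii : ∫ ω, (X ω).im * (Y ω).im ∂μ = (∫ ω, (X ω).im ∂μ) * ∫ ω, (Y ω).im ∂μ :=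
    IndepFun.integral_fun_mul_eq_mul_integral hii hXi.1 hYi.1
  have hXY : Integrable (fun ω => X ω * Y ω) μ := h.integrable_mul hX hY
  apply Complex.ext
  · rw [(key _ hXY).1, Complex.mul_re, (key _ hX).1, (key _ hX).2, (key _ hY).1, (key _ hY).2]
    have : (fun ω => (X ω * Y ω).re)
        = fun ω => (X ω).re * (Y ω).re - (X ω).im * (Y ω).im := by
      funext ω; exact Complex.mul_re _ _
    rw [this, integral_sub Irr Iii, err, eii]
  · rw [(key _ hXY).2, Complex.mul_im, (key _ hX).1, (key _ hX).2, (key _ hY).1, (key _ hY).2]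
    have : (fun ω => (X ω * Y ω).im)
        = fun ω => (X ω).re * (Y ω).im + (X ω).im * (Y ω).re := by
      funext ω; exact Complex.mul_im _ _
    rw [this, integral_add Iri Iir, eri, eir]

lemma quat_moment {f : Ω → Matrix (Fin 2) (Fin 2) ℂ}
    (hq : ∀ ω, IsQuaternionBlock (f ω))
    (ha2 : ∫ ω, ‖f ω 0 0‖ ^ 2 ∂μ = 1 / 2) (hb2 : ∫ ω, ‖f ω 0 1‖ ^ 2 ∂μ = 1 / 2)
    (haa : ∫ ω, (f ω 0 0) ^ 2 ∂μ = 0) (hbb : ∫ ω, (f ω 0 1) ^ 2 ∂μ = 0)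
    (hab : ∫ ω, f ω 0 0 * f ω 0 1 ∂μ = 0)
    (hab' : ∫ ω, f ω 0 0 * conj (f ω 0 1) ∂μ = 0)
    (p q r s : Fin 2) :
    ∫ ω, f ω p q * conj (f ω r s) ∂μ = if p = r ∧ q = s then (1/2 : ℂ) else 0 := by
  have h10 : ∀ ω, f ω 1 0 = -conj (f ω 0 1) := fun ω => (hq ω).1
  have h11 : ∀ ω, f ω 1 1 = conj (f ω 0 0) := fun ω => (hq ω).2
  have Paa' : ∫ ω, f ω 0 0 * conj (f ω 0 0) ∂μ = (1/2 : ℂ) := by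
    have e : ∀ ω, f ω 0 0 * conj (f ω 0 0) = ((‖f ω 0 0‖ ^ 2 : ℝ) : ℂ) := fun ω => by
      rw [Complex.mul_conj, Complex.normSq_eq_norm_sq]
    simp only [e]
    rw [show ∫ ω, ((‖f ω 0 0‖ ^ 2 : ℝ) : ℂ) ∂μ = ((∫ ω, ‖f ω 0 0‖ ^ 2 ∂μ : ℝ) : ℂ) from
      integral_ofReal, ha2]
    norm_num
  have Pbb' : ∫ ω, f ω 0 1 * conj (f ω 0 1) ∂μ = (1/2 : ℂ) := by
    have e : ∀ ω, f ω 0 1 * conj (f ω 0 1) = ((‖f ω 0 1‖ ^ 2 : ℝ) : ℂ) := fun ω => by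
      rw [Complex.mul_conj, Complex.normSq_eq_norm_sq]
    simp only [e]
    rw [show ∫ ω, ((‖f ω 0 1‖ ^ 2 : ℝ) : ℂ) ∂μ = ((∫ ω, ‖f ω 0 1‖ ^ 2 ∂μ : ℝ) : ℂ) from
      integral_ofReal, hb2]
    norm_num
  have fin2 : ∀ i : Fin 2, i = 0 ∨ i = 1 := by decide
  rcases fin2 p with rfl | rfl <;> rcases fin2 q with rfl | rfl <;>
    rcases fin2 r with rfl | rfl <;> rcases fin2 s with rfl | rfl
  -- (0,0,0,0)
  · rw [if_pos ⟨rfl, rfl⟩]; exact Paa'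
  -- (0,0,0,1)
  · rw [if_neg (by simp)]; exact hab'
  -- (0,0,1,0)
  · rw [if_neg (by simp)]
    have e : ∀ ω, f ω 0 0 * conj (f ω 1 0) = -(f ω 0 0 * f ω 0 1) := fun ω => by
      simp only [h10, h11, RingHom.map_mul, RingHom.map_neg, RingHom.map_pow, Complex.conj_conj]; try ring
    simp only [e]
    rw [integral_neg, hab, neg_zero]
  -- (0,0,1,1)
  · rw [if_neg (by simp)]
    have e : ∀ ω, f ω 0 0 * conj (f ω 1 1) = (f ω 0 0) ^ 2 := fun ω => by
      simp only [h10, h11, RingHom.map_mul, RingHom.map_neg, RingHom.map_pow, Complex.conj_conj]; try ring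
    simp only [e]; exact haa
  -- (0,1,0,0)
  · rw [if_neg (by simp)]
    have e : ∀ ω, f ω 0 1 * conj (f ω 0 0) = conj (f ω 0 0 * conj (f ω 0 1)) := fun ω => by
      simp only [RingHom.map_mul, Complex.conj_conj]; try ring
    simp only [e]
    rw [integral_conj, hab', map_zero]
  -- (0,1,0,1)
  · rw [if_pos ⟨rfl, rfl⟩]; exact Pbb'
  -- (0,1,1,0)
  · rw [if_neg (by simp)]
    have e : ∀ ω, f ω 0 1 * conj (f ω 1 0) = -((f ω 0 1) ^ 2) := fun ω => by
      simp only [h10, h11, RingHom.map_mul, RingHom.map_neg, RingHom.map_pow, Complex.conj_conj]; try ring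
    simp only [e]
    rw [integral_neg, hbb, neg_zero]
  -- (0,1,1,1)
  · rw [if_neg (by simp)]
    have e : ∀ ω, f ω 0 1 * conj (f ω 1 1) = f ω 0 0 * f ω 0 1 := fun ω => by
      simp only [h10, h11, RingHom.map_mul, RingHom.map_neg, RingHom.map_pow, Complex.conj_conj]; try ring
    simp only [e]; exact hab
  -- (1,0,0,0)
  · rw [if_neg (by simp)]
    have e : ∀ ω, f ω 1 0 * conj (f ω 0 0) = conj (-(f ω 0 0 * f ω 0 1)) := fun ω => by
      simp only [h10, h11, RingHom.map_mul, RingHom.map_neg, RingHom.map_pow, Complex.conj_conj]; try ring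
    simp only [e]
    rw [integral_conj, integral_neg, hab, neg_zero, map_zero]
  -- (1,0,0,1)
  · rw [if_neg (by simp)]
    have e : ∀ ω, f ω 1 0 * conj (f ω 0 1) = conj (-((f ω 0 1) ^ 2)) := fun ω => by
      simp only [h10, h11, RingHom.map_mul, RingHom.map_neg, RingHom.map_pow, Complex.conj_conj]; try ring
    simp only [e]
    rw [integral_conj, integral_neg, hbb, neg_zero, map_zero]
  -- (1,0,1,0)
  · rw [if_pos ⟨rfl, rfl⟩]
    have e : ∀ ω, f ω 1 0 * conj (f ω 1 0) = f ω 0 1 * conj (f ω 0 1) := fun ω => by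
      simp only [h10, h11, RingHom.map_mul, RingHom.map_neg, RingHom.map_pow, Complex.conj_conj]; try ring
    simp only [e]; exact Pbb'
  -- (1,0,1,1)
  · rw [if_neg (by simp)]
    have e : ∀ ω, f ω 1 0 * conj (f ω 1 1) = -(f ω 0 0 * conj (f ω 0 1)) := fun ω => by
      simp only [h10, h11, RingHom.map_mul, RingHom.map_neg, RingHom.map_pow, Complex.conj_conj]; try ring
    simp only [e]
    rw [integral_neg, hab', neg_zero]
  -- (1,1,0,0)
  · rw [if_neg (by simp)]
    have e : ∀ ω, f ω 1 1 * conj (f ω 0 0) = conj ((f ω 0 0) ^ 2) := fun ω => by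
      simp only [h10, h11, RingHom.map_mul, RingHom.map_neg, RingHom.map_pow, Complex.conj_conj]; try ring
    simp only [e]
    rw [integral_conj, haa, map_zero]
  -- (1,1,0,1)
  · rw [if_neg (by simp)]
    have e : ∀ ω, f ω 1 1 * conj (f ω 0 1) = conj (f ω 0 0 * f ω 0 1) := fun ω => by
      simp only [h10, h11, RingHom.map_mul, RingHom.map_neg, RingHom.map_pow, Complex.conj_conj]; try ring
    simp only [e]
    rw [integral_conj, hab, map_zero]
  -- (1,1,1,0)
  · rw [if_neg (by simp)]
    have e : ∀ ω, f ω 1 1 * conj (f ω 1 0) = conj (-(f ω 0 0 * conj (f ω 0 1))) := fun ω => by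
      simp only [h10, h11, RingHom.map_mul, RingHom.map_neg, RingHom.map_pow, Complex.conj_conj]; try ring
    simp only [e]
    rw [integral_conj, integral_neg, hab', neg_zero, map_zero]
  -- (1,1,1,1)
  · rw [if_pos ⟨rfl, rfl⟩]
    have e : ∀ ω, f ω 1 1 * conj (f ω 1 1) = f ω 0 0 * conj (f ω 0 0) := fun ω => by
      simp only [h10, h11, RingHom.map_mul, RingHom.map_neg, RingHom.map_pow, Complex.conj_conj]; try ring
    simp only [e]; exact Paa'

lemma trace_mul_blocks (n : ℕ) (A B : Matrix (Fin (2 * n)) (Fin (2 * n)) ℂ) :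
    Matrix.trace (A * B)
      = ∑ j : Fin n, ∑ k : Fin n, Matrix.trace (blk A j k * blk B k j) := by
  have h2 : n * 2 = 2 * n := Nat.mul_comm n 2
  set e : Fin n × Fin 2 ≃ Fin (2 * n) := finProdFinEquiv.trans (finCongr h2) with he_def
  have he : ∀ (j : Fin n) (p : Fin 2), ((e (j, p)) : ℕ) = 2 * (j : ℕ) + (p : ℕ) := by
    intro j p
    simp only [he_def, Equiv.trans_apply, finCongr_apply, Fin.coe_cast,
      finProdFinEquiv_apply_val]
    omega
  have hblk : ∀ (M : Matrix (Fin (2 * n)) (Fin (2 * n)) ℂ) (j k : Fin n) (p q : Fin 2),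
      blk M (j : ℕ) (k : ℕ) p q = M (e (j, p)) (e (k, q)) := by
    intro M j k p q
    have h1 : 2 * (j : ℕ) + (p : ℕ) < 2 * n := by have := j.2; have := p.2; omega
    have h1' : 2 * (k : ℕ) + (q : ℕ) < 2 * n := by have := k.2; have := q.2; omega
    rw [blk, dif_pos ⟨h1, h1'⟩]
    congr 1
    · exact Fin.ext (by rw [he])
    · exact Fin.ext (by rw [he])
  have tr1 : Matrix.trace (A * B) = ∑ i : Fin (2 * n), ∑ l : Fin (2 * n), A i l * B l i := by
    simp [Matrix.trace, Matrix.diag, Matrix.mul_apply]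
  rw [tr1]
  calc
    ∑ i : Fin (2 * n), ∑ l : Fin (2 * n), A i l * B l i
        = ∑ c : Fin n × Fin 2, ∑ d : Fin n × Fin 2, A (e c) (e d) * B (e d) (e c) := by
          rw [← Equiv.sum_comp e (fun i => ∑ l : Fin (2 * n), A i l * B l i)]
          refine Finset.sum_congr rfl fun c _ => ?_
          rw [← Equiv.sum_comp e (fun l => A (e c) l * B l (e c))]
    _ = ∑ j : Fin n, ∑ k : Fin n, Matrix.trace (blk A j k * blk B k j) := by
          rw [Fintype.sum_prod_type]
          refine Finset.sum_congr rfl fun j _ => ?_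
          simp_rw [Fintype.sum_prod_type]
          rw [Finset.sum_comm]
          refine Finset.sum_congr rfl fun k _ => ?_
          have : Matrix.trace (blk A j k * blk B k j)
              = ∑ p : Fin 2, ∑ q : Fin 2, blk A j k p q * blk B k j q p := by
            simp [Matrix.trace, Matrix.diag, Matrix.mul_apply]
          rw [this]
          refine Finset.sum_congr rfl fun p _ => Finset.sum_congr rfl fun q _ => ?_
          rw [hblk A j k p q, hblk B k j q p]


/-- For Type-I matrices `A`, `B` and i.i.d. random quaternion blocks `x₁, …, x_n` with the
standard moment structure,
`E[Σ_{j≠k} tr(a_{jk} x_k x_j*) tr(b_{kj} x_j x_k*)] = (1/2) tr(AB) - (1/4) Σ_j tr(a_jj) tr(b_jj)`. -/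
theorem offdiagonal_quadratic_sum_swapped
    {Ω : Type} [MeasurableSpace Ω] (P : Measure Ω) [IsProbabilityMeasure P]
    (n : ℕ) (A B : Matrix (Fin (2 * n)) (Fin (2 * n)) ℂ)
    (hA : IsTypeI A) (hB : IsTypeI B)
    (x : Fin n → Ω → Matrix (Fin 2) (Fin 2) ℂ)
    (hmeas : ∀ (j : Fin n) (p q : Fin 2), Measurable fun ω => x j ω p q)
    (hquat : ∀ ω j, IsQuaternionBlock (x j ω))
    (hindep : iIndepFun (m := fun _ => MeasurableSpace.pi)
      (fun (j : Fin n) (ω : Ω) (p q : Fin 2) => x j ω p q) P)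
    (hident : ∀ j k : Fin n,
      IdentDistrib (fun ω (p q : Fin 2) => x j ω p q)
        (fun ω (p q : Fin 2) => x k ω p q) P P)
    (hL2 : ∀ (j : Fin n) (p q : Fin 2), MemLp (fun ω => x j ω p q) 2 P)
    (hmean : ∀ (j : Fin n) (p q : Fin 2), ∫ ω, x j ω p q ∂P = 0)
    (hαβ : ∀ j : Fin n,
      (∫ ω, ‖x j ω 0 0‖ ^ 2 ∂P = 1 / 2) ∧
      (∫ ω, ‖x j ω 0 1‖ ^ 2 ∂P = 1 / 2) ∧
      (∫ ω, (x j ω 0 0) ^ 2 ∂P = 0) ∧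
      (∫ ω, (x j ω 0 1) ^ 2 ∂P = 0) ∧
      (∫ ω, x j ω 0 0 * x j ω 0 1 ∂P = 0) ∧
      (∫ ω, x j ω 0 0 * starRingEnd ℂ (x j ω 0 1) ∂P = 0)) :
    ∫ ω, ∑ j : Fin n, ∑ k ∈ Finset.univ.erase j,
        Matrix.trace (blk A j k * (x k ω * (x j ω)ᴴ)) *
          Matrix.trace (blk B k j * (x j ω * (x k ω)ᴴ)) ∂P
      = (1 / 2) * Matrix.trace (A * B) -
        (1 / 4) * ∑ j : Fin n, Matrix.trace (blk A j j) * Matrix.trace (blk B j j) := by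
  classical
  -- conjugate entries are in L²
  have hconjL2 : ∀ (j : Fin n) (p q : Fin 2), MemLp (fun ω => conj (x j ω p q)) 2 P :=
    fun j p q => memLp_conj (hL2 j p q)
  -- integrability of entry products
  have hFint : ∀ (j : Fin n) (p q r s : Fin 2),
      Integrable (fun ω => x j ω p q * conj (x j ω r s)) P :=
    fun j p q r s => integrable_mul_L2 (hL2 j p q) (hconjL2 j r s)
  have hFint' : ∀ (j : Fin n) (p q r s : Fin 2),
      Integrable (fun ω => conj (x j ω p q) * x j ω r s) P :=
    fun j p q r s => integrable_mul_L2 (hconjL2 j p q) (hL2 j r s)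
  -- second moments
  have hM : ∀ (j : Fin n) (p q r s : Fin 2),
      ∫ ω, x j ω p q * conj (x j ω r s) ∂P = if p = r ∧ q = s then (1/2 : ℂ) else 0 :=
    fun j p q r s => quat_moment (fun ω => hquat ω j) (hαβ j).1 (hαβ j).2.1 (hαβ j).2.2.1
      (hαβ j).2.2.2.1 (hαβ j).2.2.2.2.1 (hαβ j).2.2.2.2.2 p q r s
  have hM' : ∀ (j : Fin n) (p q r s : Fin 2),
      ∫ ω, conj (x j ω p q) * x j ω r s ∂P = if p = r ∧ q = s then (1/2 : ℂ) else 0 := by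
    intro j p q r s
    have e : ∀ ω, conj (x j ω p q) * x j ω r s = conj (x j ω p q * conj (x j ω r s)) :=
      fun ω => by simp only [RingHom.map_mul, Complex.conj_conj]
    simp only [e]
    rw [integral_conj, hM]
    split_ifs <;> simp [map_ofNat]
  -- measurability of entry evaluation
  have measE : ∀ p q : Fin 2, Measurable (fun m : Fin 2 → Fin 2 → ℂ => m p q) :=
    fun p q => (measurable_pi_apply q).comp (measurable_pi_apply p)
  -- independence of entry products for distinct blocks
  have hindPQ : ∀ (j k : Fin n), j ≠ k → ∀ (p q r s p' q' r' s' : Fin 2),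
      IndepFun (fun ω => x k ω p q * conj (x k ω r s))
        (fun ω => conj (x j ω p' q') * x j ω r' s') P := by
    intro j k hjk p q r s p' q' r' s'
    have h1 := hindep.indepFun (show k ≠ j from fun h => hjk h.symm)
    exact h1.comp ((measE p q).mul (RCLike.continuous_conj.measurable.comp (measE r s)))
      ((RCLike.continuous_conj.measurable.comp (measE p' q')).mul (measE r' s'))
  -- factorization of the expectation of a product
  have hprod : ∀ (j k : Fin n), j ≠ k → ∀ (p q r s p' q' r' s' : Fin 2),
      ∫ ω, (x k ω p q * conj (x k ω r s)) * (conj (x j ω p' q') * x j ω r' s') ∂P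
        = (∫ ω, x k ω p q * conj (x k ω r s) ∂P) *
            ∫ ω, conj (x j ω p' q') * x j ω r' s' ∂P := by
    intro j k hjk p q r s p' q' r' s'
    exact indep_integral_mul_c (hindPQ j k hjk p q r s p' q' r' s')
      (hFint k p q r s) (hFint' j p' q' r' s')
  -- expansion of a trace
  have texp : ∀ a u v : Matrix (Fin 2) (Fin 2) ℂ,
      Matrix.trace (a * (u * vᴴ)) = ∑ c : Fin 2 × Fin 2 × Fin 2,
        a c.1 c.2.1 * (u c.2.1 c.2.2 * conj (v c.1 c.2.2)) := by
    intro a u v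
    simp [Matrix.trace, Matrix.diag, Matrix.mul_apply, Matrix.conjTranspose_apply,
      Fin.sum_univ_two, Fintype.sum_prod_type, RCLike.star_def]
    ring
  -- expansion of the product of two traces
  have pair_expand : ∀ (j k : Fin n) (ω : Ω),
      Matrix.trace (blk A ↑j ↑k * (x k ω * (x j ω)ᴴ)) *
          Matrix.trace (blk B ↑k ↑j * (x j ω * (x k ω)ᴴ))
        = ∑ c : Fin 2 × Fin 2 × Fin 2, ∑ d : Fin 2 × Fin 2 × Fin 2,
            (blk A ↑j ↑k c.1 c.2.1 * blk B ↑k ↑j d.1 d.2.1) *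
              ((x k ω c.2.1 c.2.2 * conj (x k ω d.1 d.2.2)) *
                (conj (x j ω c.1 c.2.2) * x j ω d.2.1 d.2.2)) := by
    intro j k ω
    rw [texp, texp, Finset.sum_mul_sum]
    refine Finset.sum_congr rfl fun c _ => Finset.sum_congr rfl fun d _ => ?_
    ring
  -- integrability of each summand
  have hsummand_int : ∀ (j k : Fin n), j ≠ k → ∀ (c d : Fin 2 × Fin 2 × Fin 2),
      Integrable (fun ω => (blk A ↑j ↑k c.1 c.2.1 * blk B ↑k ↑j d.1 d.2.1) *
        ((x k ω c.2.1 c.2.2 * conj (x k ω d.1 d.2.2)) *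
          (conj (x j ω c.1 c.2.2) * x j ω d.2.1 d.2.2))) P := by
    intro j k hjk c d
    apply Integrable.const_mul
    exact (hindPQ j k hjk c.2.1 c.2.2 d.1 d.2.2 c.1 c.2.2 d.2.1 d.2.2).integrable_mul
      (hFint k c.2.1 c.2.2 d.1 d.2.2) (hFint' j c.1 c.2.2 d.2.1 d.2.2)
  -- integrability of each pair term
  have hpair_int : ∀ (j k : Fin n), j ≠ k →
      Integrable (fun ω => Matrix.trace (blk A ↑j ↑k * (x k ω * (x j ω)ᴴ)) *
        Matrix.trace (blk B ↑k ↑j * (x j ω * (x k ω)ᴴ))) P := by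
    intro j k hjk
    have e : (fun ω => Matrix.trace (blk A ↑j ↑k * (x k ω * (x j ω)ᴴ)) *
        Matrix.trace (blk B ↑k ↑j * (x j ω * (x k ω)ᴴ)))
        = fun ω => ∑ c : Fin 2 × Fin 2 × Fin 2, ∑ d : Fin 2 × Fin 2 × Fin 2,
            (blk A ↑j ↑k c.1 c.2.1 * blk B ↑k ↑j d.1 d.2.1) *
              ((x k ω c.2.1 c.2.2 * conj (x k ω d.1 d.2.2)) *
                (conj (x j ω c.1 c.2.2) * x j ω d.2.1 d.2.2)) := funext (pair_expand j k)
    rw [e]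
    exact integrable_finset_sum _ fun c _ => integrable_finset_sum _ fun d _ =>
      hsummand_int j k hjk c d
  -- value of each pair term
  have hpairval : ∀ (j k : Fin n), j ≠ k →
      ∫ ω, Matrix.trace (blk A ↑j ↑k * (x k ω * (x j ω)ᴴ)) *
          Matrix.trace (blk B ↑k ↑j * (x j ω * (x k ω)ᴴ)) ∂P
        = (1/2 : ℂ) * Matrix.trace (blk A ↑j ↑k * blk B ↑k ↑j) := by
    intro j k hjk
    have step1 : ∫ ω, Matrix.trace (blk A ↑j ↑k * (x k ω * (x j ω)ᴴ)) *
          Matrix.trace (blk B ↑k ↑j * (x j ω * (x k ω)ᴴ)) ∂P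
        = ∑ c : Fin 2 × Fin 2 × Fin 2, ∑ d : Fin 2 × Fin 2 × Fin 2,
            (blk A ↑j ↑k c.1 c.2.1 * blk B ↑k ↑j d.1 d.2.1) *
              ((if c.2.1 = d.1 ∧ c.2.2 = d.2.2 then (1/2 : ℂ) else 0) *
                (if c.1 = d.2.1 ∧ c.2.2 = d.2.2 then (1/2 : ℂ) else 0)) := by
      simp only [pair_expand j k]
      rw [integral_finset_sum _ (fun c _ => integrable_finset_sum _ (fun d _ =>
        hsummand_int j k hjk c d))]
      refine Finset.sum_congr rfl fun c _ => ?_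
      rw [integral_finset_sum _ (fun d _ => hsummand_int j k hjk c d)]
      refine Finset.sum_congr rfl fun d _ => ?_
      rw [integral_const_mul, hprod j k hjk, hM k, hM' j]
    rw [step1]
    have tr2 : Matrix.trace (blk A ↑j ↑k * blk B ↑k ↑j)
        = ∑ p : Fin 2, ∑ q : Fin 2, blk A ↑j ↑k p q * blk B ↑k ↑j q p := by
      simp [Matrix.trace, Matrix.diag, Matrix.mul_apply]
    rw [tr2]
    simp only [Fintype.sum_prod_type, Fin.sum_univ_two]
    norm_num
    ring
  -- swap integral and sums
  have hswap : ∫ ω, ∑ j : Fin n, ∑ k ∈ Finset.univ.erase j,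
        Matrix.trace (blk A ↑j ↑k * (x k ω * (x j ω)ᴴ)) *
          Matrix.trace (blk B ↑k ↑j * (x j ω * (x k ω)ᴴ)) ∂P
      = ∑ j : Fin n, ∑ k ∈ Finset.univ.erase j,
          (1/2 : ℂ) * Matrix.trace (blk A ↑j ↑k * blk B ↑k ↑j) := by
    rw [integral_finset_sum _ (fun j _ => integrable_finset_sum _ (fun k hk =>
      hpair_int j k (Finset.ne_of_mem_erase hk).symm))]
    refine Finset.sum_congr rfl fun j _ => ?_
    rw [integral_finset_sum _ (fun k hk => hpair_int j k (Finset.ne_of_mem_erase hk).symm)]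
    exact Finset.sum_congr rfl fun k hk => hpairval j k (Finset.ne_of_mem_erase hk).symm
  rw [hswap]
  -- algebra: erase sums
  have herase : ∀ j : Fin n, ∑ k ∈ Finset.univ.erase j,
      (1/2 : ℂ) * Matrix.trace (blk A ↑j ↑k * blk B ↑k ↑j)
      = (∑ k : Fin n, (1/2 : ℂ) * Matrix.trace (blk A ↑j ↑k * blk B ↑k ↑j)) -
          (1/2 : ℂ) * Matrix.trace (blk A ↑j ↑j * blk B ↑j ↑j) := by
    intro j
    have := Finset.add_sum_erase (Finset.univ : Finset (Fin n))
      (fun k => (1/2 : ℂ) * Matrix.trace (blk A ↑j ↑k * blk B ↑k ↑j)) (Finset.mem_univ j)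
    linear_combination this
  -- diagonal blocks are scalar
  have hdiag : ∀ j : Fin n, Matrix.trace (blk A ↑j ↑j * blk B ↑j ↑j)
      = (1/2 : ℂ) * (Matrix.trace (blk A ↑j ↑j) * Matrix.trace (blk B ↑j ↑j)) := by
    intro j
    obtain ⟨hA01, hA10, hAd⟩ := hA.1 j j.isLt
    obtain ⟨hB01, hB10, hBd⟩ := hB.1 j j.isLt
    simp only [Matrix.trace, Matrix.diag, Matrix.mul_apply, Fin.sum_univ_two,
      hA01, hA10, hB01, hB10, ← hAd, ← hBd]
    ring
  calc
    ∑ j : Fin n, ∑ k ∈ Finset.univ.erase j,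
        (1/2 : ℂ) * Matrix.trace (blk A ↑j ↑k * blk B ↑k ↑j)
      = ∑ j : Fin n, ((∑ k : Fin n, (1/2 : ℂ) * Matrix.trace (blk A ↑j ↑k * blk B ↑k ↑j)) -
          (1/2 : ℂ) * Matrix.trace (blk A ↑j ↑j * blk B ↑j ↑j)) :=
        Finset.sum_congr rfl fun j _ => herase j
    _ = (1/2 : ℂ) * Matrix.trace (A * B) -
        (1/4 : ℂ) * ∑ j : Fin n, Matrix.trace (blk A ↑j ↑j) * Matrix.trace (blk B ↑j ↑j) := by
        rw [Finset.sum_sub_distrib]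
        have h1 : ∑ j : Fin n, ∑ k : Fin n,
            (1/2 : ℂ) * Matrix.trace (blk A ↑j ↑k * blk B ↑k ↑j)
            = (1/2 : ℂ) * Matrix.trace (A * B) := by
          rw [trace_mul_blocks n A B, Finset.mul_sum]
          refine Finset.sum_congr rfl fun j _ => ?_
          rw [Finset.mul_sum]
        have h2 : ∑ j : Fin n, (1/2 : ℂ) * Matrix.trace (blk A ↑j ↑j * blk B ↑j ↑j)
            = (1/4 : ℂ) * ∑ j : Fin n, Matrix.trace (blk A ↑j ↑j) * Matrix.trace (blk B ↑j ↑j) := by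
          rw [Finset.mul_sum]
          refine Finset.sum_congr rfl fun j _ => ?_
          rw [hdiag j]
          ring
        rw [h1, h2]
end
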